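/- Cayley–Hamilton theorem for Manin matrices: let M be an n×n Manin matrix over an associative unital (possibly noncommutative) ring R, and let h_0, …, h_n ∈ R be the coefficients of its characteristic polynomial, defined by det^col(t·1_n − M) = Σ_{k=0}^n h_k·t^k in the polynomial ring R[t] with central variable t. Then Σ_{k=0}^n h_k·M^k = 0 (the zero n×n matrix), i.e. M satisfies its own characteristic polynomial with the coefficients h_k placed on the left of the powers M^k. -/

import Mathlib

open scoped BigOperators

/-- A matrix `M` over a (possibly noncommutative) ring is a *Manin matrix* if
entries of the same column commute and cross-commutators of 2×2 submatrices are equal. -/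
def Matrix.IsManin {R : Type*} [Ring R] {n m : ℕ} (M : Matrix (Fin n) (Fin m) R) : Prop :=
  (∀ i k : Fin n, ∀ j : Fin m, M i j * M k j = M k j * M i j) ∧
  (∀ i k : Fin n, ∀ j l : Fin m,
    M i j * M k l - M k l * M i j = M k j * M i l - M i l * M k j)

/-- Column determinant: factors multiplied in order of increasing column index. -/
noncomputable def Matrix.detCol {R : Type*} [Ring R] {n : ℕ}
    (M : Matrix (Fin n) (Fin n) R) : R :=
  ∑ σ : Equiv.Perm (Fin n),
    (Equiv.Perm.sign σ : ℤ) • ((List.finRange n).map (fun i => M (σ i) i)).prod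

/-- Row determinant: factors multiplied in order of increasing row index. -/
noncomputable def Matrix.detRow {R : Type*} [Ring R] {n : ℕ}
    (M : Matrix (Fin n) (Fin n) R) : R :=
  ∑ σ : Equiv.Perm (Fin n),
    (Equiv.Perm.sign σ : ℤ) • ((List.finRange n).map (fun i => M i (σ i))).prod

/-- Row permanent: factors multiplied in order of increasing row index. -/
noncomputable def Matrix.permRow {R : Type*} [Ring R] {n : ℕ}
    (M : Matrix (Fin n) (Fin n) R) : R :=
  ∑ σ : Equiv.Perm (Fin n), ((List.finRange n).map (fun i => M i (σ i))).prod

namespace CHManin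

variable {R : Type*} [Ring R]

open Equiv Matrix

lemma mem_take_finRange {N c : ℕ} {x : Fin N} (hx : x ∈ (List.finRange N).take c) :
    (x : ℕ) < c := by
  rw [List.mem_iff_getElem] at hx
  obtain ⟨i, hi, hix⟩ := hx
  have hi' : i < c := by
    have := hi; rw [List.length_take, List.length_finRange] at this; omega
  rw [List.getElem_take, List.getElem_finRange] at hix
  have : (x : ℕ) = i := by rw [← hix]; rfl
  omega

lemma mem_drop_finRange {N c : ℕ} {x : Fin N} (hx : x ∈ (List.finRange N).drop c) :
    c ≤ (x : ℕ) := by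
  rw [List.mem_iff_getElem] at hx
  obtain ⟨i, hi, hix⟩ := hx
  rw [List.getElem_drop, List.getElem_finRange] at hix
  have : (x : ℕ) = c + i := by rw [← hix]; rfl
  omega

lemma finRange_split {N : ℕ} (c : ℕ) (hc : c + 1 < N) :
    List.finRange N = ((List.finRange N).take c) ++ (⟨c, by omega⟩ : Fin N) ::
      (⟨c+1, hc⟩ : Fin N) :: ((List.finRange N).drop (c+2)) := by
  conv_lhs => rw [← List.take_append_drop c (List.finRange N)]
  congr 1
  rw [List.drop_eq_getElem_cons (by rw [List.length_finRange]; omega)]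
  congr 1
  · rw [List.getElem_finRange]; rfl
  rw [List.drop_eq_getElem_cons (by rw [List.length_finRange]; omega)]
  congr 1
  rw [List.getElem_finRange]; rfl

lemma map_prod_split {N : ℕ} (c : ℕ) (hc : c + 1 < N) (g : Fin N → R) :
    ((List.finRange N).map g).prod =
      (((List.finRange N).take c).map g).prod *
        (g ⟨c, by omega⟩ * (g ⟨c+1, hc⟩ *
          (((List.finRange N).drop (c+2)).map g).prod)) := by
  conv_lhs => rw [finRange_split c hc]
  rw [List.map_append, List.prod_append, List.map_cons, List.map_cons, List.prod_cons,
    List.prod_cons]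

/-- Split the product, replacing the outer parts by a reference function `G`. -/
lemma map_prod_split' {N : ℕ} (c : ℕ) (hc : c + 1 < N) (F G : Fin N → R)
    (h : ∀ x : Fin N, ((x : ℕ) < c ∨ c + 2 ≤ (x : ℕ)) → F x = G x) :
    ((List.finRange N).map F).prod =
      (((List.finRange N).take c).map G).prod *
        (F ⟨c, by omega⟩ * (F ⟨c+1, hc⟩ *
          (((List.finRange N).drop (c+2)).map G).prod)) := by
  rw [map_prod_split c hc F]
  congr 2
  · exact List.map_congr_left (fun x hx => h x (Or.inl (mem_take_finRange hx)))
  congr 2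
  exact List.map_congr_left (fun x hx => h x (Or.inr (mem_drop_finRange hx)))

/-- (a) adjacent column swap negates the column determinant of a Manin matrix. -/
lemma detCol_swap_adj {N : ℕ} (A : Matrix (Fin N) (Fin N) R) (hA : A.IsManin)
    (c : ℕ) (hc : c + 1 < N) :
    (A.submatrix id (Equiv.swap (⟨c, by omega⟩ : Fin N) ⟨c+1, hc⟩)).detCol = - A.detCol := by
  set p : Fin N := ⟨c, by omega⟩ with hp
  set q : Fin N := ⟨c+1, hc⟩ with hq
  have hpv : (p : ℕ) = c := rfl
  have hqv : (q : ℕ) = c + 1 := rfl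
  have hpq : p ≠ q := Fin.ne_of_val_ne (by omega)
  set s := Equiv.swap p q with hs
  have hsp : s p = q := Equiv.swap_apply_left p q
  have hsq : s q = p := Equiv.swap_apply_right p q
  have hss : ∀ x, s (s x) = x := fun x => Equiv.swap_apply_self p q x
  have aux : ∀ x : Fin N, ((x : ℕ) < c ∨ c + 2 ≤ (x : ℕ)) → s x = x := by
    intro x hx
    exact Equiv.swap_apply_of_ne_of_ne
      (Fin.ne_of_val_ne (by rw [hpv]; omega)) (Fin.ne_of_val_ne (by rw [hqv]; omega))
  set P : Equiv.Perm (Fin N) → R :=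
    fun σ => ((List.finRange N).map (fun i => A (σ i) i)).prod with hP
  set Q : Equiv.Perm (Fin N) → R :=
    fun σ => ((List.finRange N).map (fun i => A (σ (s i)) (s i))).prod with hQ
  have step1 : (A.submatrix id s).detCol
      = ∑ σ : Equiv.Perm (Fin N), (-(Equiv.Perm.sign σ : ℤ)) • Q σ := by
    unfold Matrix.detCol
    refine Fintype.sum_equiv (Equiv.mulRight s) _ _ (fun σ => ?_)
    have hsgn : ((Equiv.Perm.sign (σ * s) : ℤ)) = -(Equiv.Perm.sign σ : ℤ) := by
      simp [hs, Equiv.Perm.sign_swap hpq]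
    simp only [Equiv.coe_mulRight, hsgn, neg_neg, hQ]
    congr 1
    refine congrArg List.prod (List.map_congr_left (fun x _ => ?_))
    simp [Equiv.Perm.mul_apply, hss, Matrix.submatrix_apply]
  rw [step1]
  have key : ∑ σ : Equiv.Perm (Fin N),
      ((Equiv.Perm.sign σ : ℤ) • P σ + (-(Equiv.Perm.sign σ : ℤ)) • Q σ) = 0 := by
    apply Finset.sum_involution (fun σ _ => σ * s)
    · intro σ _
      have hsgn : ((Equiv.Perm.sign (σ * s) : ℤ)) = -(Equiv.Perm.sign σ : ℤ) := by
        simp [hs, Equiv.Perm.sign_swap hpq]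
      set X := (((List.finRange N).take c).map (fun i => A (σ i) i)).prod with hX
      set Y := (((List.finRange N).drop (c+2)).map (fun i => A (σ i) i)).prod with hY
      set a := A (σ p) p with ha
      set b := A (σ q) q with hb
      set a' := A (σ q) p with ha'
      set b' := A (σ p) q with hb'
      have hPσ : P σ = X * (a * (b * Y)) := map_prod_split c hc _
      have hQσ : Q σ = X * (b * (a * Y)) := by
        show ((List.finRange N).map (fun i => A (σ (s i)) (s i))).prod = _
        rw [map_prod_split' c hc _ (fun i => A (σ i) i)
          (fun x hx => by rw [aux x hx])]
        show X * (A (σ (s p)) (s p) * (A (σ (s q)) (s q) * Y)) = _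
        rw [hsp, hsq]
      have hPσs : P (σ * s) = X * (a' * (b' * Y)) := by
        show ((List.finRange N).map (fun i => A ((σ * s) i) i)).prod = _
        rw [map_prod_split' c hc _ (fun i => A (σ i) i)
          (fun x hx => by simp [Equiv.Perm.mul_apply, aux x hx])]
        show X * (A (σ (s p)) p * (A (σ (s q)) q * Y)) = _
        rw [hsp, hsq]
      have hQσs : Q (σ * s) = X * (b' * (a' * Y)) := by
        show ((List.finRange N).map (fun i => A ((σ * s) (s i)) (s i))).prod = _
        rw [map_prod_split' c hc _ (fun i => A (σ i) i)
          (fun x hx => by simp [Equiv.Perm.mul_apply, hss, aux x hx])]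
        show X * (A (σ (s (s p))) (s p) * (A (σ (s (s q))) (s q) * Y)) = _
        rw [hss p, hss q, hsp, hsq]
      rw [hPσ, hQσ, hPσs, hQσs, hsgn]
      have h2 : a * b - b * a - (a' * b' - b' * a') = 0 := by
        rw [sub_eq_zero, ha, hb, ha', hb']
        exact hA.2 (σ p) (σ q) p q
      have e0 : X * (a * (b * Y)) - X * (b * (a * Y))
          - (X * (a' * (b' * Y)) - X * (b' * (a' * Y)))
          = X * ((a * b - b * a - (a' * b' - b' * a')) * Y) := by noncomm_ring
      rw [h2] at e0
      simp only [zero_mul, mul_zero] at e0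
      have expand : (Equiv.Perm.sign σ : ℤ) • (X * (a * (b * Y)))
          + (-(Equiv.Perm.sign σ : ℤ)) • (X * (b * (a * Y)))
          + ((-(Equiv.Perm.sign σ : ℤ)) • (X * (a' * (b' * Y)))
            + (- -(Equiv.Perm.sign σ : ℤ)) • (X * (b' * (a' * Y))))
          = (Equiv.Perm.sign σ : ℤ) • (X * (a * (b * Y)) - X * (b * (a * Y))
            - (X * (a' * (b' * Y)) - X * (b' * (a' * Y)))) := by
        simp only [neg_smul, neg_neg, smul_sub]; abel
      rw [expand, e0, smul_zero]
    · intro σ _ _ hcon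
      apply hpq
      rw [← Equiv.swap_eq_one_iff]
      exact mul_left_cancel (a := σ) (by rw [mul_one]; exact hcon)
    · intro σ _; exact Finset.mem_univ _
    · intro σ _; rw [mul_assoc, Equiv.swap_mul_self, mul_one]
  have hsum : (∑ σ : Equiv.Perm (Fin N), (Equiv.Perm.sign σ : ℤ) • P σ)
      + (∑ σ : Equiv.Perm (Fin N), (-(Equiv.Perm.sign σ : ℤ)) • Q σ) = 0 := by
    rw [← Finset.sum_add_distrib]; exact key
  have hfin := eq_neg_of_add_eq_zero_right hsum
  rw [hfin]
  rfl


lemma isManin_submatrix {n m a b : ℕ} {M : Matrix (Fin n) (Fin m) R} (hM : M.IsManin)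
    (e : Fin a → Fin n) (f : Fin b → Fin m) : (M.submatrix e f).IsManin :=
  ⟨fun i k j => hM.1 (e i) (e k) (f j), fun i k j l => hM.2 (e i) (e k) (f j) (f l)⟩

/-- (b) two adjacent equal columns make the column determinant vanish. -/
lemma detCol_adj_eq_cols {N : ℕ} (A : Matrix (Fin N) (Fin N) R) (hA : A.IsManin)
    (c : ℕ) (hc : c + 1 < N)
    (hcol : ∀ r, A r ⟨c, by omega⟩ = A r ⟨c+1, hc⟩) :
    A.detCol = 0 := by
  set p : Fin N := ⟨c, by omega⟩ with hp
  set q : Fin N := ⟨c+1, hc⟩ with hq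
  have hpv : (p : ℕ) = c := rfl
  have hqv : (q : ℕ) = c + 1 := rfl
  have hpq : p ≠ q := Fin.ne_of_val_ne (by omega)
  set s := Equiv.swap p q with hs
  have hsp : s p = q := Equiv.swap_apply_left p q
  have hsq : s q = p := Equiv.swap_apply_right p q
  have aux : ∀ x : Fin N, ((x : ℕ) < c ∨ c + 2 ≤ (x : ℕ)) → s x = x := by
    intro x hx
    exact Equiv.swap_apply_of_ne_of_ne
      (Fin.ne_of_val_ne (by rw [hpv]; omega)) (Fin.ne_of_val_ne (by rw [hqv]; omega))
  unfold Matrix.detCol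
  apply Finset.sum_involution (fun σ _ => σ * s)
  · intro σ _
    have hsgn : ((Equiv.Perm.sign (σ * s) : ℤ)) = -(Equiv.Perm.sign σ : ℤ) := by
      simp [hs, Equiv.Perm.sign_swap hpq]
    set X := (((List.finRange N).take c).map (fun i => A (σ i) i)).prod with hX
    set Y := (((List.finRange N).drop (c+2)).map (fun i => A (σ i) i)).prod with hY
    have hPσ : ((List.finRange N).map (fun i => A (σ i) i)).prod
        = X * (A (σ p) p * (A (σ q) q * Y)) := map_prod_split c hc _
    have hPσs : ((List.finRange N).map (fun i => A ((σ * s) i) i)).prod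
        = X * (A (σ q) p * (A (σ p) q * Y)) := by
      rw [map_prod_split' c hc _ (fun i => A (σ i) i)
        (fun x hx => by simp [Equiv.Perm.mul_apply, aux x hx])]
      show X * (A (σ (s p)) p * (A (σ (s q)) q * Y)) = _
      rw [hsp, hsq]
    rw [hPσ, hPσs, hsgn]
    rw [← hcol (σ q), ← hcol (σ p)]
    have hcomm : A (σ p) p * A (σ q) p = A (σ q) p * A (σ p) p := hA.1 (σ p) (σ q) p
    have : X * (A (σ p) p * (A (σ q) p * Y)) = X * (A (σ q) p * (A (σ p) p * Y)) := by
      rw [← mul_assoc (A (σ p) p), hcomm, mul_assoc]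
    rw [this, neg_smul]
    exact add_neg_cancel _
  · intro σ _ _ hcon
    apply hpq
    rw [← Equiv.swap_eq_one_iff]
    exact mul_left_cancel (a := σ) (by rw [mul_one]; exact hcon)
  · intro σ _; exact Finset.mem_univ _
  · intro σ _; rw [mul_assoc, Equiv.swap_mul_self, mul_one]

/-- version of (a) with `Fin` arguments -/
lemma detCol_swap_adj' {N : ℕ} (A : Matrix (Fin N) (Fin N) R) (hA : A.IsManin)
    (p q : Fin N) (h : (q : ℕ) = (p : ℕ) + 1) :
    (A.submatrix id (Equiv.swap p q)).detCol = - A.detCol := by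
  obtain ⟨pc, hpc⟩ := p
  obtain ⟨qc, hqc⟩ := q
  simp only [Fin.val_mk] at h
  subst h
  exact detCol_swap_adj A hA pc hqc

lemma detCol_adj_eq_cols' {N : ℕ} (A : Matrix (Fin N) (Fin N) R) (hA : A.IsManin)
    (p q : Fin N) (h : (q : ℕ) = (p : ℕ) + 1) (hcol : ∀ r, A r p = A r q) :
    A.detCol = 0 := by
  obtain ⟨pc, hpc⟩ := p
  obtain ⟨qc, hqc⟩ := q
  simp only [Fin.val_mk] at h
  subst h
  exact detCol_adj_eq_cols A hA pc hqc hcol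

/-- (c) swapping any two distinct columns of a Manin matrix negates `detCol`. -/
lemma detCol_swap_aux {N : ℕ} : ∀ d : ℕ, ∀ A : Matrix (Fin N) (Fin N) R, A.IsManin →
    ∀ p q : Fin N, (p : ℕ) < (q : ℕ) → (q : ℕ) - (p : ℕ) ≤ d →
    (A.submatrix id (Equiv.swap p q)).detCol = - A.detCol := by
  intro d
  induction d with
  | zero => intro A hA p q h1 h2; omega
  | succ d ih =>
    intro A hA p q h1 h2
    by_cases hadj : (q : ℕ) = (p : ℕ) + 1
    · exact detCol_swap_adj' A hA p q hadj
    · have hq1 : 0 < (q : ℕ) := by omega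
      set q' : Fin N := ⟨(q : ℕ) - 1, by omega⟩ with hq'
      have hq'v : (q' : ℕ) = (q : ℕ) - 1 := rfl
      have hadj' : (q : ℕ) = (q' : ℕ) + 1 := by omega
      have hpq' : (p : ℕ) < (q' : ℕ) := by omega
      have hne1 : p ≠ q' := Fin.ne_of_val_ne (by omega)
      have hne2 : p ≠ q := Fin.ne_of_val_ne (by omega)
      set s1 := Equiv.swap q' q with hs1
      set s2 := Equiv.swap p q' with hs2
      have hdecomp : Equiv.swap p q = s1 * (s2 * s1) := by
        have h1 : s1 p = p := Equiv.swap_apply_of_ne_of_ne hne1 hne2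
        have h2 : s1 q' = q := Equiv.swap_apply_left q' q
        calc Equiv.swap p q = Equiv.swap (s1 p) (s1 q') := by rw [h1, h2]
        _ = s1 * Equiv.swap p q' * s1⁻¹ := Equiv.swap_apply_apply s1 p q'
        _ = s1 * (s2 * s1) := by rw [Equiv.swap_inv, mul_assoc]
      rw [hdecomp]
      have hcoe : ⇑(s1 * (s2 * s1)) = ⇑s1 ∘ (⇑s2 ∘ ⇑s1) := by
        funext x; simp [Equiv.Perm.mul_apply]
      rw [hcoe]
      have hsub : A.submatrix id (⇑s1 ∘ (⇑s2 ∘ ⇑s1))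
          = ((A.submatrix id s1).submatrix id s2).submatrix id s1 := by
        rw [Matrix.submatrix_submatrix, Matrix.submatrix_submatrix]
        rfl
      rw [hsub]
      have hM1 : (A.submatrix id ⇑s1).IsManin := isManin_submatrix hA _ _
      have hM2 : ((A.submatrix id ⇑s1).submatrix id ⇑s2).IsManin := isManin_submatrix hM1 _ _
      rw [detCol_swap_adj' _ hM2 q' q hadj']
      rw [ih _ hM1 p q' hpq' (by omega)]
      rw [detCol_swap_adj' A hA q' q hadj']
      rw [neg_neg]
 
lemma detCol_swap {N : ℕ} (A : Matrix (Fin N) (Fin N) R) (hA : A.IsManin)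
    (p q : Fin N) (hne : p ≠ q) :
    (A.submatrix id (Equiv.swap p q)).detCol = - A.detCol := by
  rcases lt_or_gt_of_ne (fun h : (p : ℕ) = (q : ℕ) => hne (Fin.ext h)) with h | h
  · exact detCol_swap_aux ((q : ℕ) - (p : ℕ)) A hA p q h le_rfl
  · rw [Equiv.swap_comm]
    exact detCol_swap_aux ((p : ℕ) - (q : ℕ)) A hA q p h le_rfl

/-- (d) two equal columns (any positions) make `detCol` of a Manin matrix vanish. -/
lemma detCol_eq_cols {N : ℕ} (A : Matrix (Fin N) (Fin N) R) (hA : A.IsManin)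
    (p q : Fin N) (hne : p ≠ q) (hcol : ∀ r, A r p = A r q) :
    A.detCol = 0 := by
  -- reduce to the case p < q
  wlog h : (p : ℕ) < (q : ℕ) generalizing p q
  · exact this q p (Ne.symm hne) (fun r => (hcol r).symm)
      (by rcases lt_or_gt_of_ne (fun hv : (p : ℕ) = (q : ℕ) => hne (Fin.ext hv)) with h' | h'
          · omega
          · exact h')
  by_cases hadj : (q : ℕ) = (p : ℕ) + 1
  · exact detCol_adj_eq_cols' A hA p q hadj hcol
  · have hp1lt : (p : ℕ) + 1 < N := by have := q.isLt; omega
    set p1 : Fin N := ⟨(p : ℕ) + 1, hp1lt⟩ with hp1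
    have hp1v : (p1 : ℕ) = (p : ℕ) + 1 := rfl
    have hne1 : p1 ≠ q := Fin.ne_of_val_ne (by omega)
    have hnep1 : p ≠ p1 := Fin.ne_of_val_ne (by omega)
    set A' := A.submatrix id (Equiv.swap p1 q) with hA'
    have hMA' : A'.IsManin := isManin_submatrix hA _ _
    have hz : A'.detCol = 0 := by
      apply detCol_adj_eq_cols' A' hMA' p p1 hp1v
      intro r
      show A r (Equiv.swap p1 q p) = A r (Equiv.swap p1 q p1)
      rw [Equiv.swap_apply_left, Equiv.swap_apply_of_ne_of_ne hnep1 hne]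
      rw [hcol]
    have := detCol_swap A hA p1 q hne1
    rw [hA'] at hz
    rw [hz] at this
    exact neg_eq_zero.mp this.symm


lemma finRange_succ_snoc (m : ℕ) :
    List.finRange (m+1) = ((List.finRange m).map Fin.castSucc) ++ [Fin.last m] := by
  apply List.ext_getElem
  · simp
  intro i h1 h2
  rw [List.getElem_finRange]
  by_cases hi : i < m
  · rw [List.getElem_append_left (by simpa using hi)]
    rw [List.getElem_map, List.getElem_finRange]
    apply Fin.ext
    rfl
  · have him : i = m := by rw [List.length_finRange] at h1; omega
    subst him
    rw [List.getElem_append_right (by simpa using le_rfl)]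
    apply Fin.ext
    simp

/-- the decomposition `Perm (Fin (m+1)) ≃ Fin (m+1) × Perm (Fin m)` tailored to the last slot -/
def lastDecompE (m : ℕ) : Fin (m+1) × Equiv.Perm (Fin m) ≃ Equiv.Perm (Fin (m+1)) :=
  (Equiv.prodCongr finSuccEquivLast (Equiv.refl _)).trans
    (Equiv.Perm.decomposeOption.symm.trans finSuccEquivLast.permCongr.symm)

lemma lastDecompE_apply (m : ℕ) (j : Fin (m+1)) (τ : Equiv.Perm (Fin m)) (x : Fin (m+1)) :
    lastDecompE m (j, τ) x =
      finSuccEquivLast.symm ((Equiv.swap none (finSuccEquivLast j))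
        ((Equiv.optionCongr τ) (finSuccEquivLast x))) := by
  simp [lastDecompE, Equiv.Perm.decomposeOption_symm_apply, Equiv.permCongr_symm,
    Equiv.permCongr_apply, Equiv.Perm.mul_apply]

lemma fSEL_swap (m : ℕ) (j : Fin (m+1)) (y : Option (Fin m)) :
    finSuccEquivLast.symm ((Equiv.swap none (finSuccEquivLast j)) y)
      = Equiv.swap j (Fin.last m) (finSuccEquivLast.symm y) := by
  rcases eq_or_ne y none with rfl | hy
  · rw [Equiv.swap_apply_left]
    have h1 : finSuccEquivLast.symm (finSuccEquivLast j) = j := Equiv.symm_apply_apply _ _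
    have h2 : (finSuccEquivLast.symm none : Fin (m+1)) = Fin.last m := by
      rw [Equiv.symm_apply_eq, finSuccEquivLast_last]
    rw [h1, h2, Equiv.swap_apply_right]
  rcases eq_or_ne y (finSuccEquivLast j) with rfl | hy2
  · rw [Equiv.swap_apply_right, Equiv.symm_apply_apply]
    have h2 : (finSuccEquivLast.symm none : Fin (m+1)) = Fin.last m := by
      rw [Equiv.symm_apply_eq, finSuccEquivLast_last]
    rw [h2, Equiv.swap_apply_left]
  · rw [Equiv.swap_apply_of_ne_of_ne hy hy2, Equiv.swap_apply_of_ne_of_ne]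
    · intro hcon
      exact hy2 ((Equiv.symm_apply_eq _).mp hcon)
    · intro hcon
      apply hy
      have h3 := (Equiv.symm_apply_eq _).mp hcon
      rwa [finSuccEquivLast_last] at h3

lemma lastDecompE_last (m : ℕ) (j : Fin (m+1)) (τ : Equiv.Perm (Fin m)) :
    lastDecompE m (j, τ) (Fin.last m) = j := by
  rw [lastDecompE_apply, finSuccEquivLast_last]
  simp [fSEL_swap]

lemma lastDecompE_castSucc (m : ℕ) (j : Fin (m+1)) (τ : Equiv.Perm (Fin m)) (u : Fin m) :
    lastDecompE m (j, τ) u.castSucc = Equiv.swap j (Fin.last m) (τ u).castSucc := by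
  rw [lastDecompE_apply, finSuccEquivLast_castSucc, fSEL_swap]
  congr 1
  simp [Equiv.optionCongr_apply]

lemma lastDecompE_sign (m : ℕ) (j : Fin (m+1)) (τ : Equiv.Perm (Fin m)) :
    ((Equiv.Perm.sign (lastDecompE m (j, τ))) : ℤ)
      = (if j = Fin.last m then (1:ℤ) else -1) * (Equiv.Perm.sign τ : ℤ) := by
  have h1 : lastDecompE m (j, τ)
      = finSuccEquivLast.symm.permCongr (Equiv.swap none (finSuccEquivLast j) * Equiv.optionCongr τ) := by
    simp [lastDecompE, Equiv.Perm.decomposeOption_symm_apply, Equiv.permCongr_symm]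
  rw [h1, Equiv.Perm.sign_permCongr, Equiv.Perm.sign_mul, Equiv.optionCongr_sign]
  by_cases hj : j = Fin.last m
  · subst hj
    rw [finSuccEquivLast_last, Equiv.swap_self]
    simp
  · have hne : (none : Option (Fin m)) ≠ finSuccEquivLast j := by
      intro hcon
      apply hj
      rw [← finSuccEquivLast_last] at hcon
      exact (Equiv.injective _ hcon).symm
    rw [Equiv.Perm.sign_swap hne]
    simp [hj]

lemma detCol_laplace_last {m : ℕ} (A : Matrix (Fin (m+1)) (Fin (m+1)) R) :
    A.detCol = ∑ j : Fin (m+1), (if j = Fin.last m then (1:ℤ) else -1) •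
      ((A.submatrix (fun u : Fin m => Equiv.swap j (Fin.last m) u.castSucc) Fin.castSucc).detCol
        * A j (Fin.last m)) := by
  have lhs : A.detCol = ∑ p : Fin (m+1) × Equiv.Perm (Fin m),
      ((Equiv.Perm.sign (lastDecompE m p) : ℤ)) •
        ((List.finRange (m+1)).map (fun i => A (lastDecompE m p i) i)).prod := by
    rw [Matrix.detCol]
    exact (Fintype.sum_equiv (lastDecompE m) _ _ (fun p => rfl)).symm
  rw [lhs, Fintype.sum_prod_type]
  refine Finset.sum_congr rfl (fun j _ => ?_)
  have hminor : (A.submatrix (fun u : Fin m => Equiv.swap j (Fin.last m) u.castSucc)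
        Fin.castSucc).detCol
      = ∑ τ : Equiv.Perm (Fin m), (Equiv.Perm.sign τ : ℤ) •
          ((List.finRange m).map
            (fun u => A (Equiv.swap j (Fin.last m) (τ u).castSucc) u.castSucc)).prod := by
    rw [Matrix.detCol]
    refine Finset.sum_congr rfl (fun τ _ => ?_)
    congr 1
  rw [hminor, Finset.sum_mul, Finset.smul_sum]
  refine Finset.sum_congr rfl (fun τ _ => ?_)
  rw [lastDecompE_sign, smul_mul_assoc, smul_smul]
  congr 1
  rw [finRange_succ_snoc m, List.map_append, List.prod_append, List.map_map]
  rw [show ((([Fin.last m]).map (fun i => A (lastDecompE m (j, τ) i) i)).prod)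
    = A (lastDecompE m (j, τ) (Fin.last m)) (Fin.last m) from by simp]
  rw [lastDecompE_last]
  congr 1
  refine congrArg List.prod (List.map_congr_left (fun u _ => ?_))
  show A (lastDecompE m (j, τ) u.castSucc) u.castSucc = _
  rw [lastDecompE_castSucc]

/-- the (transposed, signed) cofactor matrix of `N`, built from column determinants. -/
noncomputable def adjB {m : ℕ} (N : Matrix (Fin (m+1)) (Fin (m+1)) R) :
    Matrix (Fin (m+1)) (Fin (m+1)) R := fun i j =>
  ((if i = Fin.last m then (1:ℤ) else -1) * (if j = Fin.last m then (1:ℤ) else -1)) •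
    (N.submatrix (fun u : Fin m => Equiv.swap j (Fin.last m) u.castSucc)
                 (fun u : Fin m => Equiv.swap i (Fin.last m) u.castSucc)).detCol

lemma adjB_mul {m : ℕ} (N : Matrix (Fin (m+1)) (Fin (m+1)) R) (hN : N.IsManin)
    (i k : Fin (m+1)) :
    (∑ j, adjB N i j * N j k) = if i = k then N.detCol else 0 := by
  set A : Matrix (Fin (m+1)) (Fin (m+1)) R :=
    N.submatrix id (Fin.snoc (fun u : Fin m => Equiv.swap i (Fin.last m) u.castSucc) k) with hA
  have hAM : A.IsManin := isManin_submatrix hN _ _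
  have step : (∑ j, adjB N i j * N j k) = (if i = Fin.last m then (1:ℤ) else -1) • A.detCol := by
    rw [detCol_laplace_last A, Finset.smul_sum]
    refine Finset.sum_congr rfl (fun j _ => ?_)
    have hminor : A.submatrix (fun u : Fin m => Equiv.swap j (Fin.last m) u.castSucc)
        Fin.castSucc
        = N.submatrix (fun u : Fin m => Equiv.swap j (Fin.last m) u.castSucc)
            (fun u : Fin m => Equiv.swap i (Fin.last m) u.castSucc) := by
      ext r c
      simp [hA, Matrix.submatrix_apply, Fin.snoc_castSucc]
    have hlastcol : A j (Fin.last m) = N j k := by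
      simp [hA, Matrix.submatrix_apply, Fin.snoc_last]
    rw [hminor, hlastcol]
    show adjB N i j * N j k = _
    rw [adjB, smul_mul_assoc, mul_smul]
  rw [step]
  by_cases hik : i = k
  · subst hik
    have hAsw : A = N.submatrix id (Equiv.swap i (Fin.last m)) := by
      ext r c
      refine Fin.lastCases ?_ (fun u => ?_) c
      · simp [hA, Matrix.submatrix_apply, Fin.snoc_last, Equiv.swap_apply_right]
      · simp [hA, Matrix.submatrix_apply, Fin.snoc_castSucc]
    simp only [if_pos rfl]
    by_cases hil : i = Fin.last m
    · subst hil
      rw [if_pos rfl, one_smul, hAsw, Equiv.swap_self]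
      congr 1
    · rw [if_neg hil, hAsw, detCol_swap N hN i (Fin.last m) hil]
      simp
  · rw [if_neg hik]
    have hkne : Equiv.swap i (Fin.last m) k ≠ Fin.last m := by
      intro hcon
      apply hik
      have := congrArg (Equiv.swap i (Fin.last m)) hcon
      rw [Equiv.swap_apply_self, Equiv.swap_apply_right] at this
      exact this.symm ▸ rfl
    set c0 : Fin m := (Equiv.swap i (Fin.last m) k).castPred hkne with hc0
    have hc0cs : c0.castSucc = Equiv.swap i (Fin.last m) k := Fin.castSucc_castPred _ _
    have hcols : ∀ r, A r c0.castSucc = A r (Fin.last m) := by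
      intro r
      have h1 : A r (Fin.last m) = N r k := by
        simp [hA, Matrix.submatrix_apply, Fin.snoc_last]
      have h2 : A r c0.castSucc = N r (Equiv.swap i (Fin.last m) c0.castSucc) := by
        simp [hA, Matrix.submatrix_apply, Fin.snoc_castSucc]
      rw [h1, h2, hc0cs, Equiv.swap_apply_self]
    have hne : c0.castSucc ≠ Fin.last m := Fin.ne_of_lt (Fin.castSucc_lt_last c0)
    rw [detCol_eq_cols A hAM c0.castSucc (Fin.last m) hne hcols, smul_zero]


/-- coefficients above the size vanish for `detCol` of a matrix with degree ≤ 1 entries -/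
lemma detCol_coeff_eq_zero {z r : ℕ} (U : Matrix (Fin z) (Fin z) (Polynomial R))
    (h : ∀ i j, (U i j).natDegree ≤ 1) (hr : z < r) : U.detCol.coeff r = 0 := by
  rw [Matrix.detCol, Polynomial.finset_sum_coeff]
  apply Finset.sum_eq_zero
  intro σ _
  rw [Polynomial.coeff_smul]
  have hlist : ∀ l : List (Polynomial R), (∀ p ∈ l, p.natDegree ≤ 1) →
      l.prod.natDegree ≤ l.length := by
    intro l
    induction l with
    | nil => simp
    | cons a t ih =>
      intro hl
      rw [List.prod_cons, List.length_cons]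
      refine le_trans Polynomial.natDegree_mul_le ?_
      have h1 := hl a (List.mem_cons_self)
      have h2 := ih (fun p hp => hl p (List.mem_cons_of_mem _ hp))
      omega
  have hdeg : (((List.finRange z).map (fun i => U (σ i) i)).prod).natDegree ≤ z := by
    have hmem : ∀ p ∈ (List.finRange z).map (fun i => U (σ i) i), p.natDegree ≤ 1 := by
      intro p hp
      obtain ⟨i, _, rfl⟩ := List.mem_map.mp hp
      exact h _ _
    have := hlist _ hmem
    rwa [List.length_map, List.length_finRange] at this
  rw [Polynomial.coeff_eq_zero_of_natDegree_lt (lt_of_le_of_lt hdeg hr), smul_zero]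

lemma charmat_apply {n' : ℕ} (M : Matrix (Fin n') (Fin n') R) (a b : Fin n') :
    (Matrix.diagonal (fun _ : Fin n' => (Polynomial.X : Polynomial R)) -
        M.map (fun a => Polynomial.C a)) a b
      = (if a = b then Polynomial.X else 0) - Polynomial.C (M a b) := by
  simp [Matrix.sub_apply, Matrix.diagonal_apply, Matrix.map_apply]

lemma central_commutator (a b x y : Polynomial R)
    (ha : ∀ p, a * p = p * a) (hb : ∀ p, b * p = p * b) :
    (a - x) * (b - y) - (b - y) * (a - x) = x * y - y * x := by
  have e1 : (a - x) * (b - y) = a*b - a*y - x*b + x*y := by noncomm_ring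
  have e2 : (b - y) * (a - x) = b*a - b*x - y*a + y*x := by noncomm_ring
  rw [e1, e2, ha b, ha y, hb x]
  abel

lemma isManin_charmat {n' : ℕ} (M : Matrix (Fin n') (Fin n') R) (hM : M.IsManin) :
    (Matrix.diagonal (fun _ : Fin n' => (Polynomial.X : Polynomial R)) -
        M.map (fun a => Polynomial.C a)).IsManin := by
  set N := Matrix.diagonal (fun _ : Fin n' => (Polynomial.X : Polynomial R)) -
        M.map (fun a => Polynomial.C a) with hNd
  have hcen : ∀ (c : Prop) [Decidable c], ∀ p : Polynomial R,
      (if c then (Polynomial.X : Polynomial R) else 0) * p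
        = p * (if c then Polynomial.X else 0) := by
    intro c _ p
    by_cases hc : c
    · simp only [if_pos hc]
      exact Polynomial.X_mul
    · simp only [if_neg hc]
      rw [zero_mul, mul_zero]
  have key : ∀ i j k l, N i j * N k l - N k l * N i j
      = Polynomial.C (M i j * M k l - M k l * M i j) := by
    intro i j k l
    rw [hNd]
    rw [charmat_apply, charmat_apply]
    rw [central_commutator _ _ _ _ (hcen _) (hcen _)]
    rw [_root_.map_sub, _root_.map_mul, _root_.map_mul]
  constructor
  · intro i k j
    have := key i j k j
    rw [hM.1 i k j] at this
    simp only [sub_self, map_zero] at this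
    exact sub_eq_zero.mp this
  · intro i k j l
    rw [key i j k l, key k j i l, hM.2 i k j l]


end CHManin

/-- Cayley–Hamilton theorem for Manin matrices: with
`detCol (t • 1 - M) = ∑ k, h k * t^k` in `R[t]`, one has `∑ k, h k • M^k = 0`. -/
theorem cayley_hamilton_manin {R : Type*} [Ring R] {n : ℕ}
    (M : Matrix (Fin n) (Fin n) R) (hM : M.IsManin) (h : ℕ → R)
    (hdef : ∀ k : ℕ, h k =
      ((Matrix.diagonal (fun _ : Fin n => (Polynomial.X : Polynomial R)) -
        M.map (fun a => Polynomial.C a)).detCol).coeff k) :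
    ∑ k ∈ Finset.range (n + 1), h k • M ^ k = 0 := by
  obtain _ | m := n
  · ext i j
    exact i.elim0
  set Nmat := Matrix.diagonal (fun _ : Fin (m+1) => (Polynomial.X : Polynomial R)) -
        M.map (fun a => Polynomial.C a) with hNmat
  have hNM : Nmat.IsManin := CHManin.isManin_charmat M hM
  have hadj := CHManin.adjB_mul Nmat hNM
  set b : ℕ → Matrix (Fin (m+1)) (Fin (m+1)) R :=
    fun r => Matrix.of (fun i j => (CHManin.adjB Nmat i j).coeff r) with hb
  have hbapp : ∀ r i j, b r i j = (CHManin.adjB Nmat i j).coeff r := fun r i j => rfl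
  have hNdeg : ∀ a c : Fin (m+1), (Nmat a c).natDegree ≤ 1 := by
    intro a c
    rw [hNmat, CHManin.charmat_apply]
    refine le_trans (Polynomial.natDegree_sub_le _ _) ?_
    have h1 : (if a = c then (Polynomial.X : Polynomial R) else 0).natDegree ≤ 1 := by
      by_cases hac : a = c
      · simp [hac, Polynomial.natDegree_X_le]
      · simp [hac]
    have h2 : (Polynomial.C (M a c)).natDegree ≤ 1 := by
      simp [Polynomial.natDegree_C]
    omega
  have hdegz : ∀ i j : Fin (m+1), ∀ r : ℕ, m < r → (CHManin.adjB Nmat i j).coeff r = 0 := by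
    intro i j r hr
    rw [CHManin.adjB, Polynomial.coeff_smul]
    have hz := CHManin.detCol_coeff_eq_zero (z := m) (r := r)
      (Nmat.submatrix (fun u : Fin m => Equiv.swap j (Fin.last m) u.castSucc)
        (fun u : Fin m => Equiv.swap i (Fin.last m) u.castSucc))
      (fun u v => hNdeg _ _) hr
    rw [hz, smul_zero]
  have hbz : b (m+1) = 0 := by
    ext i j
    exact hdegz i j (m+1) (by omega)
  -- coefficient identities
  have hterm : ∀ (r : ℕ) (i j k' : Fin (m+1)), (CHManin.adjB Nmat i j * Nmat j k').coeff (r+1)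
      = (if j = k' then (CHManin.adjB Nmat i j).coeff r else 0)
        - (CHManin.adjB Nmat i j).coeff (r+1) * M j k' := by
    intro r i j k'
    rw [hNmat, CHManin.charmat_apply, mul_sub, Polynomial.coeff_sub, Polynomial.coeff_mul_C]
    congr 1
    by_cases hjk : j = k'
    · rw [if_pos hjk, if_pos hjk, Polynomial.coeff_mul_X]
    · rw [if_neg hjk, if_neg hjk, mul_zero, Polynomial.coeff_zero]
  have hterm0 : ∀ (i j k' : Fin (m+1)), (CHManin.adjB Nmat i j * Nmat j k').coeff 0
      = - ((CHManin.adjB Nmat i j).coeff 0 * M j k') := by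
    intro i j k'
    rw [hNmat, CHManin.charmat_apply, mul_sub, Polynomial.coeff_sub, Polynomial.coeff_mul_C]
    by_cases hjk : j = k'
    · rw [if_pos hjk, Polynomial.coeff_mul_X_zero, zero_sub]
    · rw [if_neg hjk, mul_zero, Polynomial.coeff_zero, zero_sub]
  have hrhs : ∀ (r : ℕ) (i k' : Fin (m+1)),
      (if i = k' then Nmat.detCol else 0).coeff r = if i = k' then h r else 0 := by
    intro r i k'
    rw [apply_ite (fun p : Polynomial R => p.coeff r), Polynomial.coeff_zero, hdef r, hNmat]
  -- matrix identity for r+1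
  have mS : ∀ r : ℕ, h (r+1) • (1 : Matrix (Fin (m+1)) (Fin (m+1)) R) = b r - b (r+1) * M := by
    intro r
    ext i k'
    have hc := congrArg (fun p : Polynomial R => p.coeff (r+1)) (hadj i k')
    simp only [Polynomial.finset_sum_coeff] at hc
    rw [Finset.sum_congr rfl (fun j _ => hterm r i j k')] at hc
    rw [Finset.sum_sub_distrib, Finset.sum_ite_eq' Finset.univ k'
      (fun j => (CHManin.adjB Nmat i j).coeff r)] at hc
    rw [if_pos (Finset.mem_univ k'), hrhs (r+1) i k'] at hc
    have lhsv : (h (r+1) • (1 : Matrix (Fin (m+1)) (Fin (m+1)) R)) i k'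
        = if i = k' then h (r+1) else 0 := by
      simp [Matrix.smul_apply, Matrix.one_apply, mul_ite, mul_one, mul_zero]
    rw [lhsv, ← hc]
    simp [Matrix.sub_apply, Matrix.mul_apply, hbapp]
  have m0 : h 0 • (1 : Matrix (Fin (m+1)) (Fin (m+1)) R) = -(b 0 * M) := by
    ext i k'
    have hc := congrArg (fun p : Polynomial R => p.coeff 0) (hadj i k')
    simp only [Polynomial.finset_sum_coeff] at hc
    rw [Finset.sum_congr rfl (fun j _ => hterm0 i j k')] at hc
    rw [hrhs 0 i k'] at hc
    have lhsv : (h 0 • (1 : Matrix (Fin (m+1)) (Fin (m+1)) R)) i k'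
        = if i = k' then h 0 else 0 := by
      simp [Matrix.smul_apply, Matrix.one_apply, mul_ite, mul_one, mul_zero]
    rw [lhsv, ← hc]
    simp [Matrix.neg_apply, Matrix.mul_apply, hbapp, Finset.sum_neg_distrib]
  -- telescoping
  have hsmul : ∀ k : ℕ, h k • M ^ k = (h k • (1 : Matrix (Fin (m+1)) (Fin (m+1)) R)) * M ^ k := by
    intro k
    rw [smul_mul_assoc, one_mul]
  calc ∑ k ∈ Finset.range (m + 1 + 1), h k • M ^ k
      = ∑ k ∈ Finset.range (m + 1 + 1), (h k • (1 : Matrix (Fin (m+1)) (Fin (m+1)) R)) * M ^ k := by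
        exact Finset.sum_congr rfl (fun k _ => hsmul k)
    _ = (∑ k ∈ Finset.range (m + 1), (h (k+1) • (1 : Matrix (Fin (m+1)) (Fin (m+1)) R)) * M ^ (k+1))
        + (h 0 • (1 : Matrix (Fin (m+1)) (Fin (m+1)) R)) * M ^ 0 := Finset.sum_range_succ' _ (m+1)
    _ = (∑ k ∈ Finset.range (m + 1), (b k * M ^ (k+1) - b (k+1) * M ^ (k+2)))
        + -(b 0 * M) := by
        rw [m0, pow_zero, mul_one]
        congr 1
        refine Finset.sum_congr rfl (fun k _ => ?_)
        rw [mS k, sub_mul, mul_assoc]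
        congr 2
        rw [← pow_succ']
    _ = (b 0 * M ^ 1 - b (m+1) * M ^ (m+2)) + -(b 0 * M) := by
        congr 1
        exact Finset.sum_range_sub' (fun k => b k * M ^ (k+1)) (m+1)
    _ = 0 := by
        rw [hbz, zero_mul, sub_zero, pow_one, add_neg_cancel]
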